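/- Let p be prime, q = p^r, 0 ≤ t < q, and let m ≥ q be an integer with m ≡ t (mod q). Then (-1)^{q-1-t} C(m,t) · C(m-1-t, q-1-t) ≡ 1 (mod p). -/

import Mathlib

/-- `C(p-1, k) ≡ (-1)^k mod p` for `k < p`. -/
lemma aux_choose_p_sub_one (p : ℕ) [hp : Fact p.Prime] (k : ℕ) (hk : k < p) :
    ((p - 1).choose k : ZMod p) = (-1) ^ k := by
  induction k with
  | zero => simp
  | succ k ih =>
    have hk' : k < p := Nat.lt_of_succ_lt hk
    have hpascal : p.choose (k + 1) = (p - 1).choose k + (p - 1).choose (k + 1) :=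
      Nat.choose_succ_right _ _ hp.out.pos
    have hdvd : p ∣ p.choose (k + 1) :=
      Nat.Prime.dvd_choose_self hp.out (Nat.succ_ne_zero k) hk
    have h0 : (p.choose (k + 1) : ZMod p) = 0 := by
      exact_mod_cast (ZMod.natCast_eq_zero_iff _ _).mpr hdvd
    have hc := congrArg (fun n : ℕ => (n : ZMod p)) hpascal
    simp only [Nat.cast_add, h0] at hc
    rw [ih hk'] at hc
    have h2 : ((p - 1).choose (k + 1) : ZMod p) = -(-1) ^ k := by linear_combination -hc
    rw [h2, pow_succ]
    ring

/-- `C(p^r - 1, k) ≡ (-1)^k mod p` for `k < p^r`. -/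
lemma aux_choose_pow_sub_one (p : ℕ) [hp : Fact p.Prime] (r k : ℕ) (hk : k < p ^ r) :
    ((p ^ r - 1).choose k : ZMod p) = (-1) ^ k := by
  induction r generalizing k with
  | zero =>
    simp only [pow_zero] at hk
    interval_cases k
    simp
  | succ r ih =>
    have hp1 : 1 < p := hp.out.one_lt
    have key := (ZMod.intCast_eq_intCast_iff _ _ p).mpr
      (Choose.choose_modEq_choose_mod_mul_choose_div (p := p) (n := p ^ (r + 1) - 1) (k := k))
    push_cast at key
    have hpr : 1 ≤ p ^ r := Nat.one_le_pow _ _ hp.out.pos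
    have hdecomp : p ^ (r + 1) - 1 = p * (p ^ r - 1) + (p - 1) := by
      rw [pow_succ, Nat.mul_sub, Nat.mul_one, Nat.mul_comm]
      have h1 : p ≤ p * p ^ r := Nat.le_mul_of_pos_right p hpr
      omega
    have hmod : (p ^ (r + 1) - 1) % p = p - 1 := by
      rw [hdecomp, Nat.add_comm, Nat.add_mul_mod_self_left, Nat.mod_eq_of_lt (by omega)]
    have hdiv : (p ^ (r + 1) - 1) / p = p ^ r - 1 := by
      rw [hdecomp, Nat.mul_add_div hp.out.pos, Nat.div_eq_of_lt (by omega), Nat.add_zero]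
    rw [hmod, hdiv] at key
    rw [key, aux_choose_p_sub_one p _ (Nat.mod_lt _ hp.out.pos),
      ih _ (Nat.div_lt_of_lt_mul (by rw [← pow_succ']; exact hk))]
    have hsplit : p * (k / p) + k % p = k := Nat.div_add_mod k p
    conv_rhs => rw [← hsplit]
    rw [pow_add, pow_mul, ZMod.pow_card]
    ring

/-- Lucas digit lemma: `C(n,k) ≡ C(s,k) mod p` when `n ≡ s mod p^r`, `k, s < p^r`. -/
lemma aux_choose_congr (p : ℕ) [hp : Fact p.Prime] (r n s k : ℕ)
    (hns : n ≡ s [MOD p ^ r]) (hk : k < p ^ r) (hs : s < p ^ r) :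
    (n.choose k : ZMod p) = (s.choose k : ZMod p) := by
  have h1 := (ZMod.intCast_eq_intCast_iff _ _ p).mpr
    (Choose.choose_modEq_choose_mul_prod_range_choose (p := p) (n := n) (k := k) r)
  have h2 := (ZMod.intCast_eq_intCast_iff _ _ p).mpr
    (Choose.choose_modEq_choose_mul_prod_range_choose (p := p) (n := s) (k := k) r)
  push_cast at h1 h2
  have hk0 : k / p ^ r = 0 := Nat.div_eq_of_lt hk
  have hs0 : s / p ^ r = 0 := Nat.div_eq_of_lt hs
  rw [hk0] at h1 h2
  rw [hs0] at h2
  simp only [Nat.choose_zero_right, Nat.cast_one, one_mul] at h1 h2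
  rw [h1, h2]
  apply Finset.prod_congr rfl
  intro i hi
  simp only [Finset.mem_range] at hi
  congr 2
  have hdvd : p ^ (i + 1) ∣ p ^ r := pow_dvd_pow p hi
  have heq : n % p ^ (i + 1) = s % p ^ (i + 1) := hns.of_dvd hdvd
  rw [← Nat.mod_mul_right_div_self, ← Nat.mod_mul_right_div_self, ← pow_succ, heq]

/-- Let `p` be prime, `q = p^r`, `0 ≤ t < q`, and `m ≥ q` with
`m ≡ t (mod q)`. Then `(-1)^{q-1-t} C(m,t) · C(m-1-t, q-1-t) ≡ 1 (mod p)`. -/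
theorem stmt_4 (p r : ℕ) (hp : p.Prime) (hr : 1 ≤ r) (q : ℕ) (hq : q = p ^ r)
    (t m : ℕ) (ht : t < q) (hm : q ≤ m) (hmt : m ≡ t [MOD q]) :
    ((-1) ^ (q - 1 - t) * (m.choose t : ℤ) * ((m - 1 - t).choose (q - 1 - t) : ℤ))
      ≡ 1 [ZMOD (p : ℤ)] := by
  haveI : Fact p.Prime := ⟨hp⟩
  subst hq
  set q := p ^ r with hq
  rw [← ZMod.intCast_eq_intCast_iff]
  push_cast
  have hq1 : 1 ≤ q := Nat.one_le_pow _ _ hp.pos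
  -- C(m, t) ≡ C(t, t) = 1
  have h1 : (m.choose t : ZMod p) = 1 := by
    rw [aux_choose_congr p r m t t hmt ht ht, Nat.choose_self, Nat.cast_one]
  -- m - 1 - t ≡ q - 1 mod q
  have hMq : m - 1 - t ≡ q - 1 [MOD q] := by
    have hmod : m % q = t := by
      have := hmt
      rw [Nat.ModEq, Nat.mod_eq_of_lt ht] at this
      exact this
    obtain ⟨a, ha⟩ : ∃ a, m = q * a + t :=
      ⟨m / q, by conv_lhs => rw [← Nat.div_add_mod m q, hmod]⟩
    have ha1 : 1 ≤ a := by
      rcases Nat.eq_zero_or_pos a with h | h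
      · subst h; simp at ha; omega
      · exact h
    obtain ⟨b, rfl⟩ := Nat.exists_eq_add_of_le ha1
    have hqa : q * (1 + b) = q + q * b := by ring
    have hM : m - 1 - t = q * b + (q - 1) := by omega
    rw [hM]
    show (q * b + (q - 1)) % q = (q - 1) % q
    rw [Nat.mul_add_mod]
  have hKq : q - 1 - t < q := by omega
  have h2 : ((m - 1 - t).choose (q - 1 - t) : ZMod p) =
      ((q - 1).choose (q - 1 - t) : ZMod p) :=
    aux_choose_congr p r _ _ _ hMq hKq (by omega)
  have h3 : ((q - 1).choose (q - 1 - t) : ZMod p) = (-1) ^ (q - 1 - t) :=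
    aux_choose_pow_sub_one p r _ (by omega)
  rw [h1, h2, h3, mul_one, ← pow_add, ← two_mul, pow_mul]
  norm_num
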